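/- Define L(k) = ∑_{i=1}^n [ √(π/2)·μ·erf(((2i−1)θk/(2n) − μ)/(√2σ)) − √(π/2)·((2i−1)θ/(2n))·erf(((2i−1)θk/(2n) − μ)/(√2σ)) − σ·e^{−((2i−1)θk/(2n) − μ)²/(2σ²)} ]. Then L is differentiable and L'(k) = ∑_{i=1}^n ((2i−1)²θ²/(4n²σ))·(k−1)·e^{−((2i−1)θk/(2n) − μ)²/(2σ²)}. In particular L'(k) < 0 for k < 1, L'(1) = 0, and L'(k) > 0 for k > 1, so L attains its unique global minimum at k = 1. -/

import Mathlib

noncomputable def erf (x : ℝ) : ℝ :=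
  (2 / Real.sqrt Real.pi) * ∫ t in (0 : ℝ)..x, Real.exp (-t ^ 2)

lemma erf_hasDerivAt (x : ℝ) :
    HasDerivAt erf (2 / Real.sqrt Real.pi * Real.exp (-x ^ 2)) x := by
  have hc : Continuous fun t : ℝ => Real.exp (-t ^ 2) := by continuity
  have h := (intervalIntegral.integral_hasDerivAt_right (hc.intervalIntegrable 0 x)
    (hc.stronglyMeasurableAtFilter _ _) hc.continuousAt)
  have := h.const_mul (2 / Real.sqrt Real.pi)
  exact this

lemma term_hasDerivAt (a σ μ k : ℝ) (hσ : 0 < σ) :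
    HasDerivAt (fun k => Real.sqrt (Real.pi / 2) * μ * erf ((a * k - μ) / (Real.sqrt 2 * σ))
      - Real.sqrt (Real.pi / 2) * a * erf ((a * k - μ) / (Real.sqrt 2 * σ))
      - σ * Real.exp (-(a * k - μ) ^ 2 / (2 * σ ^ 2)))
    (a ^ 2 / σ * (k - 1) * Real.exp (-(a * k - μ) ^ 2 / (2 * σ ^ 2))) k := by
  have h2 : Real.sqrt 2 ≠ 0 := by positivity
  have hπ : Real.sqrt Real.pi ≠ 0 := by positivity
  have hlin : HasDerivAt (fun k : ℝ => a * k - μ) a k := by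
    simpa using ((hasDerivAt_id k).const_mul a).sub_const μ
  have hinner : HasDerivAt (fun k : ℝ => (a * k - μ) / (Real.sqrt 2 * σ))
      (a / (Real.sqrt 2 * σ)) k := hlin.div_const _
  have herf := (erf_hasDerivAt _).comp k hinner
  have hq : HasDerivAt (fun k : ℝ => -(a * k - μ) ^ 2 / (2 * σ ^ 2))
      (-(2 * (a * k - μ) ^ 1 * a) / (2 * σ ^ 2)) k := ((hlin.pow 2).neg).div_const _
  have hexp := ((Real.hasDerivAt_exp _).comp k hq).const_mul σ
  have total := ((herf.const_mul (Real.sqrt (Real.pi / 2) * μ)).sub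
      (herf.const_mul (Real.sqrt (Real.pi / 2) * a))).sub hexp
  have hE : ((a * k - μ) / (Real.sqrt 2 * σ)) ^ 2 = (a * k - μ) ^ 2 / (2 * σ ^ 2) := by
    rw [div_pow, mul_pow, Real.sq_sqrt (by norm_num : (2:ℝ) ≥ 0)]
  rw [hE] at total
  refine total.congr_deriv ?_
  symm
  have hhalf : Real.sqrt (Real.pi / 2) = Real.sqrt Real.pi / Real.sqrt 2 :=
    Real.sqrt_div Real.pi_pos.le 2
  have hs : Real.sqrt 2 * Real.sqrt 2 = 2 := Real.mul_self_sqrt (by norm_num)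
  rw [hhalf]
  field_simp
  ring_nf
  rw [Real.sq_sqrt (by norm_num : (0:ℝ) ≤ 2)]
  ring

theorem rounding_shift_optimal_at_one
    (n : ℕ) (hn : 1 ≤ n) (θ σ μ : ℝ) (hθ : 0 < θ) (hσ : 0 < σ)
    (L : ℝ → ℝ)
    (hL : ∀ k, L k = ∑ i ∈ Finset.Icc 1 n,
      (Real.sqrt (Real.pi / 2) * μ *
          erf (((2 * (i : ℝ) - 1) * θ * k / (2 * n) - μ) / (Real.sqrt 2 * σ))
        - Real.sqrt (Real.pi / 2) * ((2 * (i : ℝ) - 1) * θ / (2 * n)) *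
          erf (((2 * (i : ℝ) - 1) * θ * k / (2 * n) - μ) / (Real.sqrt 2 * σ))
        - σ * Real.exp (-((2 * (i : ℝ) - 1) * θ * k / (2 * n) - μ) ^ 2 / (2 * σ ^ 2)))) :
    (∀ k, HasDerivAt L
      (∑ i ∈ Finset.Icc 1 n,
        ((2 * (i : ℝ) - 1) ^ 2 * θ ^ 2 / (4 * (n : ℝ) ^ 2 * σ)) * (k - 1) *
          Real.exp (-((2 * (i : ℝ) - 1) * θ * k / (2 * n) - μ) ^ 2 / (2 * σ ^ 2))) k) ∧
    (∀ k, k < 1 →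
      (∑ i ∈ Finset.Icc 1 n,
        ((2 * (i : ℝ) - 1) ^ 2 * θ ^ 2 / (4 * (n : ℝ) ^ 2 * σ)) * (k - 1) *
          Real.exp (-((2 * (i : ℝ) - 1) * θ * k / (2 * n) - μ) ^ 2 / (2 * σ ^ 2))) < 0) ∧
    ((∑ i ∈ Finset.Icc 1 n,
        ((2 * (i : ℝ) - 1) ^ 2 * θ ^ 2 / (4 * (n : ℝ) ^ 2 * σ)) * ((1 : ℝ) - 1) *
          Real.exp (-((2 * (i : ℝ) - 1) * θ * 1 / (2 * n) - μ) ^ 2 / (2 * σ ^ 2))) = 0) ∧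
    (∀ k, 1 < k →
      0 < (∑ i ∈ Finset.Icc 1 n,
        ((2 * (i : ℝ) - 1) ^ 2 * θ ^ 2 / (4 * (n : ℝ) ^ 2 * σ)) * (k - 1) *
          Real.exp (-((2 * (i : ℝ) - 1) * θ * k / (2 * n) - μ) ^ 2 / (2 * σ ^ 2)))) ∧
    (∀ k, L 1 ≤ L k) ∧ (∀ k, k ≠ 1 → L 1 < L k) := by
  have hn0 : (n : ℝ) ≠ 0 := Nat.cast_ne_zero.mpr (by omega)
  have hnpos : (0:ℝ) < n := by positivity
  -- coefficient positivity
  have hcoef : ∀ i ∈ Finset.Icc 1 n,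
      0 < (2 * (i : ℝ) - 1) ^ 2 * θ ^ 2 / (4 * (n : ℝ) ^ 2 * σ) := by
    intro i hi
    have hi1 : (1:ℝ) ≤ (i:ℝ) := by exact_mod_cast (Finset.mem_Icc.mp hi).1
    have h1 : (0:ℝ) < 2 * (i:ℝ) - 1 := by linarith
    have := pow_pos h1 2
    positivity
  -- derivative
  have hderiv : ∀ k, HasDerivAt L
      (∑ i ∈ Finset.Icc 1 n,
        ((2 * (i : ℝ) - 1) ^ 2 * θ ^ 2 / (4 * (n : ℝ) ^ 2 * σ)) * (k - 1) *
          Real.exp (-((2 * (i : ℝ) - 1) * θ * k / (2 * n) - μ) ^ 2 / (2 * σ ^ 2))) k := by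
    intro k
    have hLe : L = fun k => ∑ i ∈ Finset.Icc 1 n,
      (Real.sqrt (Real.pi / 2) * μ *
          erf (((2 * (i : ℝ) - 1) * θ * k / (2 * n) - μ) / (Real.sqrt 2 * σ))
        - Real.sqrt (Real.pi / 2) * ((2 * (i : ℝ) - 1) * θ / (2 * n)) *
          erf (((2 * (i : ℝ) - 1) * θ * k / (2 * n) - μ) / (Real.sqrt 2 * σ))
        - σ * Real.exp (-((2 * (i : ℝ) - 1) * θ * k / (2 * n) - μ) ^ 2 / (2 * σ ^ 2))) :=
      funext hL
    rw [hLe]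
    apply HasDerivAt.fun_sum
    intro i hi
    have key := term_hasDerivAt ((2 * (i : ℝ) - 1) * θ / (2 * n)) σ μ k hσ
    have ha : ∀ x : ℝ, (2 * (i : ℝ) - 1) * θ / (2 * n) * x
        = (2 * (i : ℝ) - 1) * θ * x / (2 * n) := fun x => by ring
    simp only [ha] at key
    refine key.congr_deriv ?_
    field_simp
    ring
  refine ⟨hderiv, ?_, ?_, ?_, ?_, ?_⟩
  · -- negative for k < 1
    intro k hk
    apply Finset.sum_neg
    · intro i hi
      have := hcoef i hi
      have hE : 0 < Real.exp (-((2 * (i : ℝ) - 1) * θ * k / (2 * n) - μ) ^ 2 / (2 * σ ^ 2)) :=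
        Real.exp_pos _
      exact mul_neg_of_neg_of_pos (mul_neg_of_pos_of_neg this (by linarith)) hE
    · exact Finset.nonempty_Icc.mpr hn
  · simp
  · intro k hk
    apply Finset.sum_pos
    · intro i hi
      have := hcoef i hi
      have hE : 0 < Real.exp (-((2 * (i : ℝ) - 1) * θ * k / (2 * n) - μ) ^ 2 / (2 * σ ^ 2)) :=
        Real.exp_pos _
      exact mul_pos (mul_pos this (by linarith)) hE
    · exact Finset.nonempty_Icc.mpr hn
  all_goals {
    have hcont : Continuous L :=
      continuous_iff_continuousAt.mpr fun x => (hderiv x).continuousAt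
    have hneg : ∀ k < (1:ℝ), deriv L k < 0 := by
      intro k hk
      rw [(hderiv k).deriv]
      apply Finset.sum_neg
      · intro i hi
        have := hcoef i hi
        have hE : 0 < Real.exp (-((2 * (i : ℝ) - 1) * θ * k / (2 * n) - μ) ^ 2 / (2 * σ ^ 2)) :=
          Real.exp_pos _
        exact mul_neg_of_neg_of_pos (mul_neg_of_pos_of_neg this (by linarith)) hE
      · exact Finset.nonempty_Icc.mpr hn
    have hpos : ∀ k, (1:ℝ) < k → 0 < deriv L k := by
      intro k hk
      rw [(hderiv k).deriv]
      apply Finset.sum_pos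
      · intro i hi
        have := hcoef i hi
        have hE : 0 < Real.exp (-((2 * (i : ℝ) - 1) * θ * k / (2 * n) - μ) ^ 2 / (2 * σ ^ 2)) :=
          Real.exp_pos _
        exact mul_pos (mul_pos this (by linarith)) hE
      · exact Finset.nonempty_Icc.mpr hn
    have hmono : StrictMonoOn L (Set.Ici (1:ℝ)) := by
      apply strictMonoOn_of_deriv_pos (convex_Ici 1) hcont.continuousOn
      intro x hx
      rw [interior_Ici] at hx
      exact hpos x hx
    have hanti : StrictAntiOn L (Set.Iic (1:ℝ)) := by
      apply strictAntiOn_of_deriv_neg (convex_Iic 1) hcont.continuousOn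
      intro x hx
      rw [interior_Iic] at hx
      exact hneg x hx
    have hlt : ∀ k, k ≠ 1 → L 1 < L k := by
      intro k hk
      rcases lt_or_gt_of_ne hk with h | h
      · exact hanti (Set.mem_Iic.mpr h.le) (Set.mem_Iic.mpr le_rfl) h
      · exact hmono (Set.mem_Ici.mpr le_rfl) (Set.mem_Ici.mpr h.le) h
    first
    | exact hlt
    | (intro k
       rcases eq_or_ne k 1 with h | h
       · simp [h]
       · exact (hlt k h).le)
  }
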